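/- Let w ∈ ℝ^d with ‖w‖₂² > 1, m ∈ ℝ, λ* = ‖w‖₂²/(‖w‖₂² − 1), δ_SCFE = m·(λ*/(λ* + ‖w‖₂²))·w, and δ_CW = c·w with c = m/‖w‖₂². Then δ_SCFE = δ_CW. -/

import Mathlib

/-- With λ* = ‖w‖²/(‖w‖² − 1) and c = m/‖w‖², the SCFE and C&W perturbations coincide. -/
theorem scfe_cw_equiv {d : ℕ} (w : EuclideanSpace ℝ (Fin d)) (m : ℝ)
    (hw : 1 < ‖w‖ ^ 2)
    (lamStar : ℝ) (hlam : lamStar = ‖w‖ ^ 2 / (‖w‖ ^ 2 - 1))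
    (c : ℝ) (hc : c = m / ‖w‖ ^ 2) :
    (m * (lamStar / (lamStar + ‖w‖ ^ 2))) • w = c • w := by
  have hs : (0:ℝ) < ‖w‖ ^ 2 := by linarith
  have h1 : ‖w‖ ^ 2 - 1 ≠ 0 := by linarith
  congr 1
  subst hlam hc
  have hwne : ‖w‖ ≠ 0 := by
    intro h; rw [h] at hs; simp at hs
  field_simp
  ring
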